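/- Let α > β + 1/2 > 0 and set λ = min(α - β - 1/2, 1). Then the operator u defined by (uf)(t) = t^α ∫₀^∞ x^β e^{-xt} f(x) dx maps L₂[0,∞) boundedly into the Hölder space C_λ[0,1]: there is a constant C = C(α,β) such that for every f ∈ L₂[0,∞) and all 0 ≤ s < t ≤ 1, |(uf)(t) - (uf)(s)| ≤ C (t-s)^λ ‖f‖_{L₂[0,∞)}, and sup_{t∈[0,1]} |(uf)(t)| ≤ C ‖f‖_{L₂[0,∞)}. -/

import Mathlib

open MeasureTheory Filter Set

/-- The integral operator `(uf)(t) = t^α ∫₀^∞ x^β e^{-xt} f(x) dx` (note `(uf)(0) = 0`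
automatically, since `0^α = 0` for `α > 0`). -/
noncomputable def uFun (α β : ℝ) (f : Lp ℝ 2 (volume.restrict (Set.Ioi (0 : ℝ)))) (t : ℝ) : ℝ :=
  t ^ α * ∫ x in Set.Ioi (0 : ℝ), x ^ β * Real.exp (-(x * t)) * (f : ℝ → ℝ) x

noncomputable section

local notation "μ0" => MeasureTheory.volume.restrict (Set.Ioi (0:ℝ))

lemma cs {μ : Measure ℝ} (g : ℝ → ℝ) (hg : MemLp g 2 μ)
    (f : Lp ℝ 2 μ) :
    |∫ x, g x * (f : ℝ → ℝ) x ∂μ| ≤ Real.sqrt (∫ x, g x ^ 2 ∂μ) * ‖f‖ := by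
  set G : Lp ℝ 2 μ := hg.toLp g with hG
  have hGg : (G : ℝ → ℝ) =ᵐ[μ] g := hg.coeFn_toLp
  have h1 : ∫ x, g x * (f : ℝ → ℝ) x ∂μ = (inner ℝ G f : ℝ) := by
    rw [L2.inner_def]
    refine (integral_congr_ae ?_).symm
    filter_upwards [hGg] with x hx
    simp [hx, RCLike.inner_apply, mul_comm]
  have h2 : ∫ x, g x ^ 2 ∂μ = (inner ℝ G G : ℝ) := by
    rw [L2.inner_def]
    refine (integral_congr_ae ?_).symm
    filter_upwards [hGg] with x hx
    simp [hx, RCLike.inner_apply, sq]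
  rw [h1, h2, real_inner_self_eq_norm_sq, Real.sqrt_sq (norm_nonneg _)]
  exact abs_real_inner_le_norm G f

lemma cs_int {μ : Measure ℝ} (g : ℝ → ℝ) (hg : MemLp g 2 μ)
    (f : Lp ℝ 2 μ) :
    Integrable (fun x => g x * (f : ℝ → ℝ) x) μ := by
  have h := L2.integrable_inner (𝕜 := ℝ) (hg.toLp g) f
  apply h.congr
  filter_upwards [hg.coeFn_toLp] with x hx
  simp [hx, RCLike.inner_apply, mul_comm]

lemma ker_meas (q b : ℝ) :
    AEStronglyMeasurable (fun x : ℝ => x ^ q * Real.exp (-(x*b))) μ0 := by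
  apply Measurable.aestronglyMeasurable
  measurability

lemma ker_sq_eq (q b : ℝ) {x : ℝ} (hx : 0 < x) :
    x ^ (2*q) * Real.exp (-(2*b) * x ^ (1:ℝ)) = (x ^ q * Real.exp (-(x*b)))^2 := by
  rw [Real.rpow_one, mul_pow, sq, sq, ← Real.exp_add, ← Real.rpow_add hx]
  ring_nf

lemma ker_sq_int (q b : ℝ) (hq : -1 < 2*q) (hb : 0 < b) :
    Integrable (fun x : ℝ => (x ^ q * Real.exp (-(x*b)))^2) μ0 := by
  have h := integrableOn_rpow_mul_exp_neg_mul_rpow (s := 2*q) (p := 1) (b := 2*b) hq one_pos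
    (by linarith)
  exact h.congr_fun (fun x hx => ker_sq_eq q b hx) measurableSet_Ioi

lemma ker_sq_val (q b : ℝ) (hq : -1 < 2*q) (hb : 0 < b) :
    ∫ x in Set.Ioi (0:ℝ), (x ^ q * Real.exp (-(x*b)))^2
      = (1/(2*b))^(2*q+1) * Real.Gamma (2*q+1) := by
  rw [← Real.integral_rpow_mul_exp_neg_mul_Ioi (a := 2*q+1) (r := 2*b) (by linarith) (by linarith)]
  refine setIntegral_congr_fun measurableSet_Ioi (fun x hx => ?_)
  rw [add_sub_cancel_right]
  have := ker_sq_eq q b (mem_Ioi.mp hx)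
  rw [← this, Real.rpow_one]
  ring_nf

lemma key_bound (q b c : ℝ) (hq : -1 < 2*q) (hb : 0 < b) (hc : 0 ≤ c)
    (g : ℝ → ℝ) (hg : AEStronglyMeasurable g μ0)
    (hdom : ∀ᵐ x ∂μ0, |g x| ≤ c * (x ^ q * Real.exp (-(x*b))))
    (f : Lp ℝ 2 μ0) :
    |∫ x in Set.Ioi (0:ℝ), g x * (f : ℝ → ℝ) x|
      ≤ c * (Real.sqrt (Real.Gamma (2*q+1)) * b ^ (-(q+1/2))) * ‖f‖ := by
  set m : ℝ → ℝ := fun x => c * (x ^ q * Real.exp (-(x*b))) with hm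
  have hm2 : Integrable (fun x => m x ^ 2) μ0 := by
    have := ((ker_sq_int q b hq hb).const_mul (c^2))
    apply this.congr
    filter_upwards with x
    simp [m]; ring
  have hg2 : Integrable (fun x => g x ^ 2) μ0 := by
    refine hm2.mono' ((hg.mul hg).congr ?_) ?_
    · filter_upwards with x; rw [Pi.mul_apply, sq]
    · filter_upwards [hdom] with x hx
      have h1 : ‖g x ^ 2‖ = |g x|^2 := by rw [Real.norm_eq_abs, abs_pow]
      rw [h1]
      calc |g x|^2 ≤ (c * (x ^ q * Real.exp (-(x*b))))^2 := by
            apply pow_le_pow_left₀ (abs_nonneg _) hx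
        _ = m x ^ 2 := rfl
  have hgm : MemLp g 2 μ0 := (memLp_two_iff_integrable_sq hg).mpr hg2
  have h1 := cs g hgm f
  have h2 : ∫ x, g x ^ 2 ∂μ0 ≤ ∫ x, m x ^ 2 ∂μ0 := by
    refine integral_mono_ae hg2 hm2 ?_
    filter_upwards [hdom] with x hx
    calc g x ^ 2 = |g x| ^ 2 := (sq_abs _).symm
      _ ≤ m x ^ 2 := pow_le_pow_left₀ (abs_nonneg _) hx 2
  have h3 : ∫ x, m x ^ 2 ∂μ0 = c^2 * ((1/(2*b))^(2*q+1) * Real.Gamma (2*q+1)) := by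
    rw [← ker_sq_val q b hq hb, ← integral_const_mul]
    refine integral_congr_ae ?_
    filter_upwards with x
    simp [m]; ring
  have hq2 : (0:ℝ) < q + 1/2 := by linarith
  have hsq : Real.sqrt (∫ x, m x ^ 2 ∂μ0)
      ≤ c * (Real.sqrt (Real.Gamma (2*q+1)) * b ^ (-(q+1/2))) := by
    rw [h3]
    have hΓ : 0 ≤ Real.Gamma (2*q+1) := Real.Gamma_nonneg_of_nonneg (by linarith)
    rw [Real.sqrt_mul (by positivity), Real.sqrt_sq hc,
        Real.sqrt_mul (by positivity), Real.sqrt_eq_rpow ((1/(2*b))^(2*q+1)),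
        ← Real.rpow_mul (by positivity)]
    have he : (2*q+1) * (1/2) = q + 1/2 := by ring
    rw [he]
    have hle : (1/(2*b)) ^ (q+1/2) ≤ b ^ (-(q+1/2)) := by
      rw [one_div, Real.inv_rpow (by positivity), ← Real.rpow_neg (by positivity)]
      exact Real.rpow_le_rpow_of_nonpos hb (by linarith) (by linarith)
    calc c * ((1/(2*b)) ^ (q+1/2) * Real.sqrt (Real.Gamma (2*q+1)))
        = c * (Real.sqrt (Real.Gamma (2*q+1)) * (1/(2*b)) ^ (q+1/2)) := by ring
      _ ≤ c * (Real.sqrt (Real.Gamma (2*q+1)) * b ^ (-(q+1/2))) := by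
          gcongr
  calc |∫ x in Set.Ioi (0:ℝ), g x * (f : ℝ → ℝ) x|
      ≤ Real.sqrt (∫ x, g x ^ 2 ∂μ0) * ‖f‖ := h1
    _ ≤ Real.sqrt (∫ x, m x ^ 2 ∂μ0) * ‖f‖ := by
        exact mul_le_mul_of_nonneg_right (Real.sqrt_le_sqrt h2) (norm_nonneg f)
    _ ≤ c * (Real.sqrt (Real.Gamma (2*q+1)) * b ^ (-(q+1/2))) * ‖f‖ := by
        gcongr

end

lemma one_sub_exp_le (y l : ℝ) (hy : 0 ≤ y) (hl0 : 0 ≤ l) (hl1 : l ≤ 1) :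
    1 - Real.exp (-y) ≤ y ^ l := by
  rcases le_or_gt 1 y with h | h
  · have h1 : 1 - Real.exp (-y) ≤ 1 := by
      have := (Real.exp_pos (-y)).le; linarith
    exact h1.trans (Real.one_le_rpow h hl0)
  · rcases eq_or_lt_of_le hy with h0 | h0
    · rw [← h0]
      simpa using Real.rpow_nonneg le_rfl l
    · have h1 : 1 - Real.exp (-y) ≤ y := by
        have := Real.add_one_le_exp (-y); linarith
      calc 1 - Real.exp (-y) ≤ y := h1
        _ = y ^ (1:ℝ) := (Real.rpow_one y).symm
        _ ≤ y ^ l := Real.rpow_le_rpow_of_exponent_ge h0 h.le hl1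

lemma rpow_add_le (x y p : ℝ) (hx : 0 ≤ x) (hy : 0 ≤ y) (hp : 0 ≤ p) (hp1 : p ≤ 1) :
    (x + y) ^ p ≤ x ^ p + y ^ p := by
  have h := NNReal.rpow_add_le_add_rpow (Real.toNNReal x) (Real.toNNReal y) hp hp1
  have h2 := NNReal.coe_le_coe.2 h
  push_cast at h2
  rwa [Real.coe_toNNReal x hx, Real.coe_toNNReal y hy] at h2

lemma rpow_diff (a l s t : ℝ) (ha : 0 < a) (hl0 : 0 < l) (hl1 : l ≤ 1) (hla : l ≤ a)
    (hs : 0 ≤ s) (hst : s < t) :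
    t ^ a - s ^ a ≤ max a 1 * ((t - s) ^ l * t ^ (a - l)) := by
  have ht : 0 < t := lt_of_le_of_lt hs hst
  have hts : 0 < t - s := by linarith
  rcases le_or_gt a 1 with ha1 | ha1
  · have h1 : t ^ a ≤ (t - s) ^ a + s ^ a := by
      have := rpow_add_le (t - s) s a hts.le hs ha.le ha1
      rwa [sub_add_cancel] at this
    have h2 : (t - s) ^ a = (t - s) ^ l * (t - s) ^ (a - l) := by
      rw [← Real.rpow_add hts]; congr 1; ring
    have h3 : (t - s) ^ (a - l) ≤ t ^ (a - l) :=
      Real.rpow_le_rpow hts.le (by linarith) (by linarith)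
    calc t ^ a - s ^ a ≤ (t - s) ^ a := by linarith
      _ = (t - s) ^ l * (t - s) ^ (a - l) := h2
      _ ≤ (t - s) ^ l * t ^ (a - l) := by
          exact mul_le_mul_of_nonneg_left h3 (by positivity)
      _ ≤ max a 1 * ((t - s) ^ l * t ^ (a - l)) := by
          nth_rewrite 1 [← one_mul ((t - s) ^ l * t ^ (a - l))]
          exact mul_le_mul_of_nonneg_right (le_max_right a 1) (by positivity)
  · have hu : -1 ≤ s / t - 1 := by
      have h0 : 0 ≤ s / t := div_nonneg hs ht.le
      linarith
    have hber := one_add_mul_self_le_rpow_one_add hu ha1.le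
    rw [add_sub_cancel] at hber
    have hid : t * (s / t) = s := by field_simp
    have hst' : s ^ a = t ^ a * (s / t) ^ a := by
      rw [← Real.mul_rpow ht.le (div_nonneg hs ht.le), hid]
    have h5 : t ^ a * (1 - s / t) = t ^ (a - 1) * (t - s) := by
      have ht' : t ^ a = t ^ (a - 1) * t := by
        rw [← Real.rpow_add_one ht.ne' (a - 1), sub_add_cancel]
      calc t ^ a * (1 - s / t) = t ^ (a - 1) * (t - t * (s / t)) := by rw [ht']; ring
        _ = t ^ (a - 1) * (t - s) := by rw [hid]
    have hta : 0 < t ^ a := Real.rpow_pos_of_pos ht a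
    have h6 : t ^ a * (1 + a * (s / t - 1)) ≤ s ^ a := by
      rw [hst']
      exact mul_le_mul_of_nonneg_left hber hta.le
    have key : t ^ a - s ^ a ≤ a * (t ^ (a - 1) * (t - s)) := by
      have h7 : t ^ a - s ^ a ≤ a * (t ^ a * (1 - s / t)) := by nlinarith [h6]
      rw [h5] at h7; exact h7
    have h8 : t - s = (t - s) ^ l * (t - s) ^ (1 - l) := by
      rw [← Real.rpow_add hts]
      have : l + (1 - l) = 1 := by ring
      rw [this, Real.rpow_one]
    have h9 : (t - s) ^ (1 - l) ≤ t ^ (1 - l) :=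
      Real.rpow_le_rpow hts.le (by linarith) (by linarith)
    have h10 : t ^ (a - 1) * t ^ (1 - l) = t ^ (a - l) := by
      rw [← Real.rpow_add ht]; congr 1; ring
    calc t ^ a - s ^ a ≤ a * (t ^ (a - 1) * (t - s)) := key
      _ = a * (t ^ (a - 1) * ((t - s) ^ l * (t - s) ^ (1 - l))) := by rw [← h8]
      _ ≤ a * (t ^ (a - 1) * ((t - s) ^ l * t ^ (1 - l))) := by
          have := mul_le_mul_of_nonneg_left h9 (Real.rpow_nonneg hts.le l)
          have := mul_le_mul_of_nonneg_left this (Real.rpow_nonneg ht.le (a - 1))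
          exact mul_le_mul_of_nonneg_left this ha.le
      _ = a * ((t - s) ^ l * (t ^ (a - 1) * t ^ (1 - l))) := by ring
      _ = a * ((t - s) ^ l * t ^ (a - l)) := by rw [h10]
      _ ≤ max a 1 * ((t - s) ^ l * t ^ (a - l)) :=
          mul_le_mul_of_nonneg_right (le_max_left a 1) (by positivity)

/-- **The operator `u` maps `L₂[0,∞)` boundedly into the Hölder space `C_λ[0,1]`.**
Let `α > β + 1/2 > 0` and `λ = min(α - β - 1/2, 1)`. Then there is `C = C(α,β)` such that for
every `f ∈ L₂[0,∞)` and all `0 ≤ s < t ≤ 1`,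
`|(uf)(t) - (uf)(s)| ≤ C (t-s)^λ ‖f‖_{L₂}` and `sup_{[0,1]} |uf| ≤ C ‖f‖_{L₂}`. -/
theorem u_into_holder
    (α β : ℝ) (hβ : 0 < β + 1 / 2) (hαβ : β + 1 / 2 < α) :
    ∃ C : ℝ, 0 ≤ C ∧
      ∀ f : Lp ℝ 2 (volume.restrict (Set.Ioi (0 : ℝ))),
        (∀ s t : ℝ, 0 ≤ s → s < t → t ≤ 1 →
          |uFun α β f t - uFun α β f s| ≤
            C * (t - s) ^ min (α - β - 1 / 2) 1 * ‖f‖) ∧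
        (∀ t ∈ Set.Icc (0 : ℝ) 1, |uFun α β f t| ≤ C * ‖f‖) := by
  have hα : 0 < α := by linarith
  set l := min (α - β - 1 / 2) 1 with hldef
  have hl0 : 0 < l := lt_min (by linarith) one_pos
  have hl1 : l ≤ 1 := min_le_right _ _
  have hlαβ : l ≤ α - β - 1/2 := min_le_left _ _
  have hla : l ≤ α := by linarith
  have hβ2 : -1 < 2*β := by linarith
  have hβl2 : -1 < 2*(β+l) := by linarith
  set c0 := Real.sqrt (Real.Gamma (2*β+1)) with hc0
  set c1 := Real.sqrt (Real.Gamma (2*(β+l)+1)) with hc1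
  have hc0n : 0 ≤ c0 := Real.sqrt_nonneg _
  have hc1n : 0 ≤ c1 := Real.sqrt_nonneg _
  have hmax0 : 0 ≤ max α 1 := le_trans zero_le_one (le_max_right α 1)
  have hCn : 0 ≤ c0 + max α 1 * c0 + c1 := by positivity
  refine ⟨c0 + max α 1 * c0 + c1, hCn, fun f => ?_⟩
  have hfn : 0 ≤ ‖f‖ := norm_nonneg f
  -- base Cauchy-Schwarz bound on the integral
  have base : ∀ t : ℝ, 0 < t →
      |∫ x in Set.Ioi (0:ℝ), x ^ β * Real.exp (-(x*t)) * (f : ℝ → ℝ) x|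
        ≤ c0 * t ^ (-(β+1/2)) * ‖f‖ := by
    intro t ht
    have h := key_bound β t 1 hβ2 ht zero_le_one
      (fun x => x ^ β * Real.exp (-(x*t))) (ker_meas β t) ?_ f
    · rw [one_mul] at h
      simpa using h
    · filter_upwards [ae_restrict_mem measurableSet_Ioi] with x hx
      have hx0 : (0:ℝ) < x := hx
      rw [one_mul, abs_of_nonneg (mul_nonneg (Real.rpow_nonneg hx0.le β) (Real.exp_pos _).le)]
  have kmem : ∀ t : ℝ, 0 < t →
      MemLp (fun x : ℝ => x ^ β * Real.exp (-(x*t))) 2 (volume.restrict (Set.Ioi (0:ℝ))) :=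
    fun t ht => (memLp_two_iff_integrable_sq (ker_meas β t)).mpr (ker_sq_int β t hβ2 ht)
  -- sup-type bound for positive t
  have sup1 : ∀ t : ℝ, 0 < t → |uFun α β f t| ≤ c0 * t ^ (α - β - 1/2) * ‖f‖ := by
    intro t ht
    have hb := base t ht
    show |t ^ α * ∫ x in Set.Ioi (0:ℝ), x ^ β * Real.exp (-(x*t)) * (f : ℝ → ℝ) x| ≤ _
    rw [abs_mul, abs_of_nonneg (Real.rpow_nonneg ht.le α)]
    calc t ^ α * |∫ x in Set.Ioi (0:ℝ), x ^ β * Real.exp (-(x*t)) * (f : ℝ → ℝ) x|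
        ≤ t ^ α * (c0 * t ^ (-(β+1/2)) * ‖f‖) :=
          mul_le_mul_of_nonneg_left hb (Real.rpow_nonneg ht.le α)
      _ = c0 * (t ^ α * t ^ (-(β+1/2))) * ‖f‖ := by ring
      _ = c0 * t ^ (α - β - 1/2) * ‖f‖ := by
          rw [← Real.rpow_add ht]
          have : α + -(β+1/2) = α - β - 1/2 := by ring
          rw [this]
  constructor
  · -- Hölder estimate
    intro s t hs hst ht1
    have ht0 : 0 < t := lt_of_le_of_lt hs hst
    have hts : 0 < t - s := by linarith
    rcases eq_or_lt_of_le hs with hs0 | hs0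
    · -- s = 0
      have huf0 : uFun α β f s = 0 := by
        simp [uFun, ← hs0, Real.zero_rpow hα.ne']
      rw [huf0, sub_zero]
      calc |uFun α β f t| ≤ c0 * t ^ (α - β - 1/2) * ‖f‖ := sup1 t ht0
        _ ≤ c0 * t ^ l * ‖f‖ := by
            have := Real.rpow_le_rpow_of_exponent_ge ht0 ht1 hlαβ
            exact mul_le_mul_of_nonneg_right (mul_le_mul_of_nonneg_left this hc0n) hfn
        _ = c0 * (t - s) ^ l * ‖f‖ := by rw [← hs0, sub_zero]
        _ ≤ (c0 + max α 1 * c0 + c1) * (t - s) ^ l * ‖f‖ := by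
            have h1 : 0 ≤ (t - s) ^ l := Real.rpow_nonneg hts.le l
            nlinarith [mul_nonneg hmax0 hc0n, mul_nonneg (mul_nonneg hmax0 hc0n) (mul_nonneg h1 hfn), mul_nonneg hc1n (mul_nonneg h1 hfn)]
    · -- 0 < s
      have hint_t := cs_int _ (kmem t ht0) f
      have hint_s := cs_int _ (kmem s hs0) f
      set It := ∫ x in Set.Ioi (0:ℝ), x ^ β * Real.exp (-(x*t)) * (f : ℝ → ℝ) x with hIt
      set Is := ∫ x in Set.Ioi (0:ℝ), x ^ β * Real.exp (-(x*s)) * (f : ℝ → ℝ) x with hIs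
      have hD : ∫ x in Set.Ioi (0:ℝ),
          (x ^ β * Real.exp (-(x*t)) - x ^ β * Real.exp (-(x*s))) * (f : ℝ → ℝ) x
          = It - Is := by
        simp_rw [sub_mul]
        exact integral_sub hint_t hint_s
      have hdiff : |It - Is| ≤ (t-s)^l * (Real.sqrt (Real.Gamma (2*(β+l)+1)) * s^(-(β+l+1/2))) * ‖f‖ := by
        rw [← hD]
        have h := key_bound (β+l) s ((t-s)^l) hβl2 hs0 (Real.rpow_nonneg hts.le l)
          (fun x => x ^ β * Real.exp (-(x*t)) - x ^ β * Real.exp (-(x*s)))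
          ((ker_meas β t).sub (ker_meas β s)) ?_ f
        · have he : 2*(β+l) + 1 = 2*(β+l)+1 := rfl
          convert h using 4 <;> ring
        · filter_upwards [ae_restrict_mem measurableSet_Ioi] with x hx
          have hx0 : (0:ℝ) < x := hx
          have hrn : 0 ≤ x ^ β := Real.rpow_nonneg hx0.le β
          have e1 : Real.exp (-(x*t)) ≤ Real.exp (-(x*s)) := by
            apply Real.exp_le_exp.2
            nlinarith
          have habs : |x ^ β * Real.exp (-(x*t)) - x ^ β * Real.exp (-(x*s))|
              = x ^ β * (Real.exp (-(x*s)) - Real.exp (-(x*t))) := by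
            rw [abs_of_nonpos (by nlinarith)]; ring
          rw [habs]
          have e2 : Real.exp (-(x*s)) - Real.exp (-(x*t))
              = Real.exp (-(x*s)) * (1 - Real.exp (-(x*(t-s)))) := by
            rw [mul_sub, mul_one, ← Real.exp_add]
            congr 2
            ring
          have e3 : 1 - Real.exp (-(x*(t-s))) ≤ (x*(t-s))^l :=
            one_sub_exp_le _ l (mul_nonneg hx0.le hts.le) hl0.le hl1
          calc x ^ β * (Real.exp (-(x*s)) - Real.exp (-(x*t)))
              = x ^ β * (Real.exp (-(x*s)) * (1 - Real.exp (-(x*(t-s))))) := by rw [e2]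
            _ ≤ x ^ β * (Real.exp (-(x*s)) * (x*(t-s))^l) := by
                refine mul_le_mul_of_nonneg_left ?_ hrn
                exact mul_le_mul_of_nonneg_left e3 (Real.exp_pos _).le
            _ = (t-s)^l * (x ^ (β+l) * Real.exp (-(x*s))) := by
                rw [Real.mul_rpow hx0.le hts.le, Real.rpow_add hx0]
                ring
      have hdec : uFun α β f t - uFun α β f s = (t^α - s^α) * It + s^α * (It - Is) := by
        show t ^ α * It - s ^ α * Is = _
        ring
      rw [hdec]
      have hIt_b := base t ht0
      rw [← hIt] at hIt_b
      have h1 : |(t^α - s^α) * It| ≤ max α 1 * c0 * ((t-s)^l * ‖f‖) := by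
        rw [abs_mul,
          abs_of_nonneg (sub_nonneg.2 (Real.rpow_le_rpow hs hst.le hα.le))]
        calc (t^α - s^α) * |It|
            ≤ (max α 1 * ((t-s)^l * t^(α-l))) * (c0 * t^(-(β+1/2)) * ‖f‖) := by
              apply mul_le_mul (rpow_diff α l s t hα hl0 hl1 hla hs hst) hIt_b (abs_nonneg _)
              positivity
          _ = max α 1 * c0 * ((t-s)^l * ‖f‖) * (t^(α-l) * t^(-(β+1/2))) := by ring
          _ = max α 1 * c0 * ((t-s)^l * ‖f‖) * t^(α-l-β-1/2) := by
              rw [← Real.rpow_add ht0]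
              have : α - l + -(β+1/2) = α-l-β-1/2 := by ring
              rw [this]
          _ ≤ max α 1 * c0 * ((t-s)^l * ‖f‖) * 1 := by
              refine mul_le_mul_of_nonneg_left (Real.rpow_le_one ht0.le ht1 (by linarith)) ?_
              positivity
          _ = max α 1 * c0 * ((t-s)^l * ‖f‖) := mul_one _
      have h2 : |s^α * (It - Is)| ≤ c1 * ((t-s)^l * ‖f‖) := by
        rw [abs_mul, abs_of_nonneg (Real.rpow_nonneg hs α)]
        calc s^α * |It - Is|
            ≤ s^α * ((t-s)^l * (c1 * s^(-(β+l+1/2))) * ‖f‖) :=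
              mul_le_mul_of_nonneg_left hdiff (Real.rpow_nonneg hs α)
          _ = c1 * ((t-s)^l * ‖f‖) * (s^α * s^(-(β+l+1/2))) := by ring
          _ = c1 * ((t-s)^l * ‖f‖) * s^(α-(β+l+1/2)) := by
              rw [← Real.rpow_add hs0]
              have : α + -(β+l+1/2) = α-(β+l+1/2) := by ring
              rw [this]
          _ ≤ c1 * ((t-s)^l * ‖f‖) * 1 := by
              refine mul_le_mul_of_nonneg_left
                (Real.rpow_le_one hs (by linarith) (by linarith)) ?_
              positivity
          _ = c1 * ((t-s)^l * ‖f‖) := mul_one _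
      calc |(t^α - s^α) * It + s^α * (It - Is)|
          ≤ |(t^α - s^α) * It| + |s^α * (It - Is)| := abs_add_le _ _
        _ ≤ max α 1 * c0 * ((t-s)^l * ‖f‖) + c1 * ((t-s)^l * ‖f‖) := add_le_add h1 h2
        _ ≤ (c0 + max α 1 * c0 + c1) * (t - s) ^ l * ‖f‖ := by
            have h3 : 0 ≤ (t - s) ^ l := Real.rpow_nonneg hts.le l
            have h4 : (c0 + max α 1 * c0 + c1) * (t - s) ^ l * ‖f‖
                = c0 * ((t-s)^l * ‖f‖) + (max α 1 * c0 * ((t-s)^l * ‖f‖) + c1 * ((t-s)^l * ‖f‖)) := by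
              ring
            rw [h4]
            have h5 : 0 ≤ c0 * ((t-s)^l * ‖f‖) := mul_nonneg hc0n (mul_nonneg h3 hfn)
            linarith
  · -- sup bound
    intro t ht
    obtain ⟨ht0, ht1⟩ := ht
    rcases eq_or_lt_of_le ht0 with h0 | h0
    · have : uFun α β f t = 0 := by
        simp [uFun, ← h0, Real.zero_rpow hα.ne']
      rw [this, abs_zero]
      positivity
    · calc |uFun α β f t| ≤ c0 * t ^ (α - β - 1/2) * ‖f‖ := sup1 t h0
        _ ≤ c0 * 1 * ‖f‖ := by
            refine mul_le_mul_of_nonneg_right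
              (mul_le_mul_of_nonneg_left (Real.rpow_le_one ht0 ht1 (by linarith)) hc0n) hfn
        _ = c0 * ‖f‖ := by ring
        _ ≤ (c0 + max α 1 * c0 + c1) * ‖f‖ := by
            have h4 : (c0 + max α 1 * c0 + c1) * ‖f‖
                = c0 * ‖f‖ + (max α 1 * c0 * ‖f‖ + c1 * ‖f‖) := by ring
            rw [h4]
            have h5 : 0 ≤ max α 1 * c0 * ‖f‖ := mul_nonneg (mul_nonneg hmax0 hc0n) hfn
            have h6 : 0 ≤ c1 * ‖f‖ := mul_nonneg hc1n hfn
            linarith
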